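/- Let 0 < α < 1 and t > 0. Then F_{t,α}(s) = o(s^N) as s → 0⁺ for every natural number N. -/

import Mathlib

open MeasureTheory Complex

/-- The subordinator `F_{t,α}(s) = (1/2πi) ∫_{σ-i∞}^{σ+i∞} e^{zs - t z^α} dz` for `s ≥ 0`
(and `0` for `s < 0`), parametrized along the vertical line `z = 1 + iy` (the integral is
independent of the choice `σ > 0`); the principal branch of `z^α` has `Re z^α > 0` for
`Re z > 0` when `0 < α < 1`. -/
noncomputable def subordinator (t α : ℝ) (s : ℝ) : ℝ :=
  if s < 0 then 0
  else (2 * Real.pi)⁻¹ *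
    (∫ y : ℝ, Complex.exp (((1 : ℂ) + (y : ℂ) * Complex.I) * (s : ℂ)
      - (t : ℂ) * (((1 : ℂ) + (y : ℂ) * Complex.I) ^ (α : ℂ)))).re

open Filter Topology Set
open MeasureTheory Complex Filter Topology Set

-- L0
lemma tendsto_pow_mul_exp_neg_rpow (n : ℕ) {b p : ℝ} (hb : 0 < b) (hp : 0 < p) :
    Tendsto (fun x : ℝ => x ^ n * Real.exp (-b * x ^ p)) atTop (nhds 0) := by
  have h1 : Tendsto (fun u : ℝ => u ^ ((n : ℝ) / p) * Real.exp (-b * u)) atTop (nhds 0) :=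
    tendsto_rpow_mul_exp_neg_mul_atTop_nhds_zero _ b hb
  have h2 := h1.comp (tendsto_rpow_atTop hp)
  apply h2.congr'
  filter_upwards [eventually_ge_atTop (1:ℝ)] with x hx
  have hx0 : (0:ℝ) ≤ x := by linarith
  have : (x ^ p) ^ ((n:ℝ)/p) = x ^ n := by
    rw [← Real.rpow_natCast x n, ← Real.rpow_mul hx0]
    congr 1
    field_simp
  simp only [Function.comp_apply, this]

-- L1
lemma tendsto_shift_pow_mul_exp_neg_rpow (a : ℝ) (n : ℕ) {b p : ℝ} (hb : 0 < b) (hp : 0 < p) :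
    Tendsto (fun x : ℝ => (a + x) ^ n * Real.exp (-b * x ^ p)) atTop (nhds 0) := by
  have h := (tendsto_pow_mul_exp_neg_rpow n hb hp).const_mul ((2:ℝ)^n)
  rw [mul_zero] at h
  apply squeeze_zero' ?_ ?_ h
  · filter_upwards [eventually_ge_atTop (|a|+1)] with x hx
    have : (0:ℝ) ≤ a + x := by
      have := abs_nonneg a; have := neg_abs_le a; linarith
    positivity
  · filter_upwards [eventually_ge_atTop (|a|+1)] with x hx
    have hxa : a ≤ x := by have := le_abs_self a; linarith
    have hx0 : (0:ℝ) ≤ x := by have := abs_nonneg a; linarith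
    have h1 : (a + x)^n ≤ (2*x)^n := by
      apply pow_le_pow_left₀ (by nlinarith [abs_nonneg a, neg_abs_le a]) (by linarith) n
    calc (a+x)^n * Real.exp (-b*x^p) ≤ (2*x)^n * Real.exp (-b*x^p) := by
          apply mul_le_mul_of_nonneg_right h1 (Real.exp_nonneg _)
      _ = 2^n * (x^n * Real.exp (-b*x^p)) := by rw [mul_pow]; ring

-- L2
lemma integrable_master (n : ℕ) {b p : ℝ} (hb : 0 < b) (hp : 0 < p) :
    Integrable fun y : ℝ => (1 + |y|) ^ n * Real.exp (-b * |y| ^ p) := by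
  have hcont : Continuous fun y : ℝ => (1 + |y|) ^ n * Real.exp (-b * |y| ^ p) := by
    apply Continuous.mul
    · exact (continuous_const.add _root_.continuous_abs).pow n
    · exact Real.continuous_exp.comp
        (continuous_const.mul (_root_.continuous_abs.rpow_const fun y => Or.inr hp.le))
  -- bound
  obtain ⟨u0, hu0⟩ : ∃ u0 : ℝ, ∀ u ≥ u0, (1+u)^(n+2) * Real.exp (-b * u^p) ≤ 1 := by
    have := tendsto_shift_pow_mul_exp_neg_rpow 1 (n+2) hb hp
    rw [Metric.tendsto_atTop] at this
    obtain ⟨u0, h⟩ := this 1 one_pos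
    exact ⟨u0, fun u hu => by
      have := h u hu
      rw [Real.dist_eq, sub_zero] at this
      exact (le_abs_self _).trans this.le⟩
  have hcont2 : ContinuousOn (fun u : ℝ => (1+u)^(n+2) * Real.exp (-b * u^p)) (Icc 0 (max u0 0)) := by
    apply Continuous.continuousOn
    apply Continuous.mul ((continuous_const.add continuous_id).pow _)
    exact Real.continuous_exp.comp (continuous_const.mul (continuous_id.rpow_const fun y => Or.inr hp.le))
  obtain ⟨C0, hC0⟩ := (isCompact_Icc).exists_bound_of_continuousOn hcont2
  set C := max 1 C0 with hC
  have hbd : ∀ u : ℝ, 0 ≤ u → (1+u)^(n+2) * Real.exp (-b * u^p) ≤ C := by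
    intro u hu
    rcases le_or_gt u (max u0 0) with h | h
    · have := hC0 u ⟨hu, h⟩
      calc (1+u)^(n+2) * Real.exp (-b*u^p) ≤ ‖(1+u)^(n+2) * Real.exp (-b*u^p)‖ := le_abs_self _
        _ ≤ C0 := this
        _ ≤ C := le_max_right _ _
    · exact (hu0 u (le_of_lt (lt_of_le_of_lt (le_max_left _ _) h))).trans (le_max_left _ _)
  apply Integrable.mono' ((integrable_inv_one_add_sq).const_mul C) hcont.aestronglyMeasurable
  apply ae_of_all
  intro y
  have hy : (0:ℝ) < 1 + y^2 := by positivity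
  have key : ((1 + |y|)^n * Real.exp (-b * |y|^p)) * (1 + y^2) ≤ C := by
    have h1 : (1 + y^2) ≤ (1 + |y|)^2 := by nlinarith [abs_nonneg y, _root_.sq_abs y]
    calc ((1 + |y|)^n * Real.exp (-b * |y|^p)) * (1 + y^2)
        ≤ ((1 + |y|)^n * Real.exp (-b * |y|^p)) * (1 + |y|)^2 := by
          apply mul_le_mul_of_nonneg_left h1 (by positivity)
      _ = (1 + |y|)^(n+2) * Real.exp (-b * |y|^p) := by ring
      _ ≤ C := hbd _ (abs_nonneg y)
  rw [Real.norm_eq_abs, _root_.abs_of_nonneg (by positivity)]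
  rw [show C * (1 + y^2)⁻¹ = C / (1 + y^2) by ring, le_div_iff₀ hy]
  exact key

noncomputable def fn (t α : ℝ) (n : ℕ) (z : ℂ) : ℂ :=
  z ^ n * Complex.exp (-(t:ℂ) * z ^ (α:ℂ))

lemma cos_pos_aux {α : ℝ} (hα0 : 0 < α) (hα1 : α < 1) : 0 < Real.cos (α * Real.pi / 2) := by
  apply Real.cos_pos_of_mem_Ioo
  constructor
  · nlinarith [Real.pi_pos]
  · nlinarith [Real.pi_pos]

-- L3
lemma re_cpow {α : ℝ} (hα0 : 0 < α) (hα1 : α < 1) {z : ℂ} (hz : 0 < z.re) :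
    Real.cos (α * Real.pi / 2) * ‖z‖ ^ α ≤ (z ^ (α:ℂ)).re := by
  have hz0 : z ≠ 0 := fun h => by simp [h] at hz
  have habs : 0 < ‖z‖ := norm_pos_iff.mpr hz0
  rw [Complex.cpow_def_of_ne_zero hz0, Complex.exp_re]
  have hre : (Complex.log z * (α:ℂ)).re = Real.log ‖z‖ * α := by
    simp [Complex.mul_re, Complex.log_re, Complex.log_im]
  have him : (Complex.log z * (α:ℂ)).im = Complex.arg z * α := by
    simp [Complex.mul_im, Complex.log_im]
  rw [hre, him]
  rw [show Real.exp (Real.log ‖z‖ * α) = ‖z‖ ^ α from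
    (Real.rpow_def_of_pos habs α).symm]
  have harg : |Complex.arg z| ≤ Real.pi / 2 := Complex.abs_arg_le_pi_div_two_iff.2 hz.le
  have h1 : Real.cos (α * Real.pi / 2) ≤ Real.cos (Complex.arg z * α) := by
    rw [← Real.cos_abs (Complex.arg z * α)]
    apply Real.cos_le_cos_of_nonneg_of_le_pi (abs_nonneg _) (by nlinarith [Real.pi_pos])
    rw [abs_mul, _root_.abs_of_nonneg hα0.le]
    calc |Complex.arg z| * α ≤ (Real.pi/2) * α := by
          apply mul_le_mul_of_nonneg_right harg hα0.le
      _ = α * (Real.pi/2) := by ring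
      _ ≤ α * Real.pi / 2 := by ring_nf; exact le_refl _
  calc Real.cos (α * Real.pi / 2) * ‖z‖ ^ α
      ≤ Real.cos (Complex.arg z * α) * ‖z‖ ^ α := by
        apply mul_le_mul_of_nonneg_right h1 (Real.rpow_nonneg habs.le α)
    _ = ‖z‖ ^ α * Real.cos (Complex.arg z * α) := by ring

-- L4
lemma norm_fn_le {α t : ℝ} (hα0 : 0 < α) (hα1 : α < 1) (ht : 0 < t) (n : ℕ) {σ y : ℝ}
    (hσ : 0 < σ) :
    ‖fn t α n ((σ:ℂ) + (y:ℂ) * I)‖ ≤ (σ + |y|)^n *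
      (Real.exp (-(t * Real.cos (α * Real.pi / 2)/2) * σ^α) *
       Real.exp (-(t * Real.cos (α * Real.pi / 2)/2) * |y|^α)) := by
  set c := t * Real.cos (α * Real.pi / 2) with hc
  have hcpos : 0 < c := mul_pos ht (cos_pos_aux hα0 hα1)
  set z : ℂ := (σ:ℂ) + (y:ℂ) * I with hzdef
  have hzre : z.re = σ := by simp [hzdef]
  have hzim : z.im = y := by simp [hzdef]
  have hrepos : 0 < z.re := by rw [hzre]; exact hσ
  have habs : 0 < ‖z‖ := by
    apply norm_pos_iff.mpr; intro h; rw [h] at hzre; simp at hzre; exact hσ.ne' hzre.symm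
  -- norm of exp factor
  have hnexp : ‖Complex.exp (-(t:ℂ) * z ^ (α:ℂ))‖ = Real.exp (-(t * (z ^ (α:ℂ)).re)) := by
    rw [Complex.norm_exp]
    congr 1
    simp [Complex.mul_re]
  have hkey : c * ‖z‖ ^ α ≤ t * (z ^ (α:ℂ)).re := by
    rw [hc, mul_assoc]
    exact mul_le_mul_of_nonneg_left (re_cpow hα0 hα1 hrepos) ht.le
  -- |z|^α ≥ both σ^α and |y|^α
  have hmax : σ^α + |y|^α ≤ 2 * ‖z‖ ^ α := by
    have h1 : σ^α ≤ ‖z‖ ^ α := by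
      apply Real.rpow_le_rpow hσ.le _ hα0.le
      calc σ = z.re := hzre.symm
        _ ≤ |z.re| := le_abs_self _
        _ ≤ ‖z‖ := Complex.abs_re_le_norm z
    have h2 : |y|^α ≤ ‖z‖ ^ α := by
      apply Real.rpow_le_rpow (abs_nonneg y) _ hα0.le
      calc |y| = |z.im| := by rw [hzim]
        _ ≤ ‖z‖ := Complex.abs_im_le_norm z
    linarith
  have hexp_le : Real.exp (-(t * (z ^ (α:ℂ)).re)) ≤
      Real.exp (-(c/2) * σ^α) * Real.exp (-(c/2) * |y|^α) := by
    rw [← Real.exp_add]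
    apply Real.exp_le_exp.2
    have : c * ‖z‖ ^ α ≥ (c/2) * (σ^α + |y|^α) := by
      have := mul_le_mul_of_nonneg_left hmax (by linarith : (0:ℝ) ≤ c/2)
      linarith
    nlinarith
  have hpow : ‖z ^ n‖ ≤ (σ + |y|)^n := by
    rw [norm_pow]
    apply pow_le_pow_left₀ (norm_nonneg _) _ n
    calc ‖z‖ ≤ |z.re| + |z.im| := Complex.norm_le_abs_re_add_abs_im z
      _ = σ + |y| := by rw [hzre, hzim, _root_.abs_of_pos hσ]
  calc ‖fn t α n z‖ = ‖z^n‖ * ‖Complex.exp (-(t:ℂ) * z ^ (α:ℂ))‖ := norm_mul _ _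
    _ ≤ (σ + |y|)^n * (Real.exp (-(c/2) * σ^α) * Real.exp (-(c/2) * |y|^α)) := by
        apply mul_le_mul hpow _ (norm_nonneg _) (by positivity)
        rw [hnexp]; exact hexp_le
    _ = (σ + |y|)^n * (Real.exp (-(c/2) * σ^α) * Real.exp (-(c/2) * |y|^α)) := rfl

-- continuity
lemma continuous_fn (t α : ℝ) (n : ℕ) {σ : ℝ} (hσ : 0 < σ) :
    Continuous fun y : ℝ => fn t α n ((σ:ℂ) + (y:ℂ) * I) := by
  rw [continuous_iff_continuousAt]
  intro y
  have hbase : Continuous fun y : ℝ => (σ:ℂ) + (y:ℂ) * I :=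
    continuous_const.add (Complex.continuous_ofReal.mul continuous_const)
  have hslit : ((σ:ℂ) + (y:ℂ) * I) ∈ Complex.slitPlane := by
    apply Complex.mem_slitPlane_iff.2
    left; simpa using hσ
  have h1 : ContinuousAt (fun z : ℂ => z ^ (α:ℂ)) ((σ:ℂ) + (y:ℂ) * I) :=
    continuousAt_cpow_const hslit
  have h2 : ContinuousAt (fn t α n) ((σ:ℂ) + (y:ℂ) * I) := by
    apply ContinuousAt.mul ((continuous_pow n).continuousAt)
    exact (Complex.continuous_exp.continuousAt).comp (continuousAt_const.mul h1)
  exact ContinuousAt.comp (x := y) h2 hbase.continuousAt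

-- integrability
lemma integrable_fn {α t : ℝ} (hα0 : 0 < α) (hα1 : α < 1) (ht : 0 < t) (n : ℕ) {σ : ℝ}
    (hσ : 0 < σ) :
    Integrable fun y : ℝ => fn t α n ((σ:ℂ) + (y:ℂ) * I) := by
  set c := t * Real.cos (α * Real.pi / 2) with hc
  have hcpos : 0 < c := mul_pos ht (cos_pos_aux hα0 hα1)
  have hmaster := (integrable_master n (by linarith : (0:ℝ) < c/2) hα0).const_mul
    ((1+σ)^n * Real.exp (-(c/2) * σ^α))
  apply Integrable.mono' hmaster (continuous_fn t α n hσ).aestronglyMeasurable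
  apply ae_of_all
  intro y
  calc ‖fn t α n ((σ:ℂ) + (y:ℂ) * I)‖
      ≤ (σ + |y|)^n * (Real.exp (-(c/2) * σ^α) * Real.exp (-(c/2) * |y|^α)) := by
        have := norm_fn_le hα0 hα1 ht n (y := y) hσ
        rw [← hc] at this
        convert this using 4 <;> ring
    _ ≤ ((1+σ) * (1+|y|))^n * (Real.exp (-(c/2) * σ^α) * Real.exp (-(c/2) * |y|^α)) := by
        apply mul_le_mul_of_nonneg_right _ (by positivity)
        apply pow_le_pow_left₀ (by positivity) _ n
        nlinarith [abs_nonneg y]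
    _ = (1+σ)^n * Real.exp (-(c/2) * σ^α) * ((1 + |y|)^n * Real.exp (-(c/2) * |y|^α)) := by
        rw [mul_pow]; ring
-- differentiability
lemma differentiableAt_fn (t α : ℝ) (n : ℕ) {z : ℂ} (hz : 0 < z.re) :
    DifferentiableAt ℂ (fn t α n) z := by
  have hslit : z ∈ Complex.slitPlane := Complex.mem_slitPlane_iff.2 (Or.inl hz)
  exact (differentiableAt_pow n).mul
    (((differentiableAt_id.cpow (differentiableAt_const _) hslit).const_mul _).cexp)

-- contour shift
lemma vert_eq {α t : ℝ} (hα0 : 0 < α) (hα1 : α < 1) (ht : 0 < t) (n : ℕ) {σ₁ σ₂ : ℝ}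
    (h1 : 0 < σ₁) (h12 : σ₁ ≤ σ₂) :
    ∫ y : ℝ, fn t α n ((σ₁:ℂ) + (y:ℂ) * I) = ∫ y : ℝ, fn t α n ((σ₂:ℂ) + (y:ℂ) * I) := by
  set c := t * Real.cos (α * Real.pi / 2) with hc
  have hcpos : 0 < c := mul_pos ht (cos_pos_aux hα0 hα1)
  have h2 : 0 < σ₂ := lt_of_lt_of_le h1 h12
  have htrunc : ∀ σ : ℝ, 0 < σ → Tendsto (fun R : ℝ => ∫ y in (-R)..R, fn t α n ((σ:ℂ) + (y:ℂ)*I))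
      atTop (nhds (∫ y : ℝ, fn t α n ((σ:ℂ) + (y:ℂ)*I))) := fun σ hσ =>
    intervalIntegral_tendsto_integral (integrable_fn hα0 hα1 ht n hσ)
      tendsto_neg_atTop_atBot tendsto_id
  -- norm bound on the difference of truncated vertical integrals
  have hnorm : ∀ R : ℝ, 1 ≤ R →
      ‖(∫ y in (-R)..R, fn t α n ((σ₂:ℂ) + (y:ℂ)*I)) -
        (∫ y in (-R)..R, fn t α n ((σ₁:ℂ) + (y:ℂ)*I))‖ ≤
      2 * (σ₂ - σ₁) * ((σ₂ + R)^n * Real.exp (-(c/2) * R^α)) := by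
    intro R hR
    have hR0 : 0 < R := lt_of_lt_of_le one_pos hR
    have Hd : DifferentiableOn ℂ (fn t α n)
        (Set.uIcc ((σ₁:ℂ) + (-R:ℝ)*I).re ((σ₂:ℂ) + (R:ℝ)*I).re ×ℂ
         Set.uIcc ((σ₁:ℂ) + (-R:ℝ)*I).im ((σ₂:ℂ) + (R:ℝ)*I).im) := by
      intro z hz
      rw [Complex.mem_reProdIm] at hz
      have hz1 := hz.1
      simp only [Complex.add_re, Complex.ofReal_re, Complex.mul_re, Complex.I_re,
        Complex.ofReal_im, Complex.I_im] at hz1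
      norm_num at hz1
      rw [Set.uIcc_of_le h12] at hz1
      exact (differentiableAt_fn t α n (lt_of_lt_of_le h1 hz1.1)).differentiableWithinAt
    have rect := Complex.integral_boundary_rect_eq_zero_of_differentiableOn (fn t α n)
      ((σ₁:ℂ) + (-R:ℝ)*I) ((σ₂:ℂ) + (R:ℝ)*I) Hd
    simp only [Complex.add_re, Complex.add_im, Complex.ofReal_re, Complex.ofReal_im,
      Complex.mul_re, Complex.mul_im, Complex.I_re, Complex.I_im, Complex.ofReal_neg,
      smul_eq_mul] at rect
    norm_num at rect
    -- rect : (A - B + I*V2) - I*V1 = 0 with A bottom (im = -R), B top (im = R)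
    have heq : Complex.I * ((∫ y in (-R)..R, fn t α n ((σ₂:ℂ) + (y:ℂ)*I)) -
        (∫ y in (-R)..R, fn t α n ((σ₁:ℂ) + (y:ℂ)*I))) =
        (∫ x in σ₁..σ₂, fn t α n ((x:ℂ) + (R:ℝ)*I)) -
        (∫ x in σ₁..σ₂, fn t α n ((x:ℂ) + -((R:ℂ) * I))) := by
      linear_combination rect
    -- bound the horizontal integrals
    have hCnn : (0:ℝ) ≤ (σ₂ + R)^n * Real.exp (-(c/2) * R^α) := by positivity
    have hbound : ∀ y : ℝ, |y| = R →
        ∀ x ∈ Set.uIoc σ₁ σ₂, ‖fn t α n ((x:ℂ) + (y:ℝ)*I)‖ ≤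
          (σ₂ + R)^n * Real.exp (-(c/2) * R^α) := by
      intro y hy x hx
      rw [Set.uIoc_of_le h12] at hx
      have hx1 : 0 < x := lt_trans h1 hx.1
      have := norm_fn_le hα0 hα1 ht n (σ := x) (y := y) hx1
      rw [← hc] at this
      refine this.trans ?_
      rw [hy]
      have e1 : Real.exp (-(c/2) * x^α) ≤ 1 := by
        apply Real.exp_le_one_iff.2
        have : (0:ℝ) ≤ x^α := Real.rpow_nonneg hx1.le α
        nlinarith
      calc (x + R)^n * (Real.exp (-(c/2) * x^α) * Real.exp (-(c/2) * R^α))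
          ≤ (σ₂ + R)^n * (1 * Real.exp (-(c/2) * R^α)) := by
            apply mul_le_mul
            · exact pow_le_pow_left₀ (by linarith) (by linarith [hx.2]) n
            · apply mul_le_mul_of_nonneg_right e1 (Real.exp_nonneg _)
            · positivity
            · positivity
        _ = (σ₂ + R)^n * Real.exp (-(c/2) * R^α) := by ring
    have hB : ‖∫ x in σ₁..σ₂, fn t α n ((x:ℂ) + (R:ℝ)*I)‖ ≤
        ((σ₂ + R)^n * Real.exp (-(c/2) * R^α)) * |σ₂ - σ₁| :=
      intervalIntegral.norm_integral_le_of_norm_le_const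
        (hbound R (by rw [abs_of_pos hR0]) )
    have hA : ‖∫ x in σ₁..σ₂, fn t α n ((x:ℂ) + -((R:ℂ)*I))‖ ≤
        ((σ₂ + R)^n * Real.exp (-(c/2) * R^α)) * |σ₂ - σ₁| := by
      have harg : ∀ x : ℝ, ((x:ℂ) + -((R:ℂ)*I)) = (x:ℂ) + ((-R:ℝ):ℂ)*I := by
        intro x; push_cast; ring
      simp only [harg]
      exact intervalIntegral.norm_integral_le_of_norm_le_const
        (hbound (-R) (by rw [abs_neg, abs_of_pos hR0]) )
    calc ‖(∫ y in (-R)..R, fn t α n ((σ₂:ℂ) + (y:ℂ)*I)) -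
          (∫ y in (-R)..R, fn t α n ((σ₁:ℂ) + (y:ℂ)*I))‖
        = ‖Complex.I * ((∫ y in (-R)..R, fn t α n ((σ₂:ℂ) + (y:ℂ)*I)) -
          (∫ y in (-R)..R, fn t α n ((σ₁:ℂ) + (y:ℂ)*I)))‖ := by
          rw [norm_mul, Complex.norm_I, one_mul]
      _ = ‖(∫ x in σ₁..σ₂, fn t α n ((x:ℂ) + (R:ℝ)*I)) -
          (∫ x in σ₁..σ₂, fn t α n ((x:ℂ) + -((R:ℂ) * I)))‖ := by rw [heq]
      _ ≤ ((σ₂ + R)^n * Real.exp (-(c/2) * R^α)) * |σ₂ - σ₁| +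
          ((σ₂ + R)^n * Real.exp (-(c/2) * R^α)) * |σ₂ - σ₁| :=
          (norm_sub_le _ _).trans (add_le_add hB hA)
      _ ≤ 2 * (σ₂ - σ₁) * ((σ₂ + R)^n * Real.exp (-(c/2) * R^α)) := by
          rw [_root_.abs_of_nonneg (by linarith : (0:ℝ) ≤ σ₂ - σ₁)]
          ring_nf
          exact le_refl _
  -- limits
  have hzero : Tendsto (fun R : ℝ => (∫ y in (-R)..R, fn t α n ((σ₂:ℂ) + (y:ℂ)*I)) -
      (∫ y in (-R)..R, fn t α n ((σ₁:ℂ) + (y:ℂ)*I))) atTop (nhds 0) := by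
    apply squeeze_zero_norm' ?_ ?_
    · exact fun R => 2 * (σ₂ - σ₁) * ((σ₂ + R)^n * Real.exp (-(c/2) * R^α))
    · filter_upwards [eventually_ge_atTop (1:ℝ)] with R hR
      exact hnorm R hR
    · have := (tendsto_shift_pow_mul_exp_neg_rpow σ₂ n
        (by linarith : (0:ℝ) < c/2) hα0).const_mul (2 * (σ₂ - σ₁))
      rw [mul_zero] at this
      exact this
  have hlim : Tendsto (fun R : ℝ => (∫ y in (-R)..R, fn t α n ((σ₂:ℂ) + (y:ℂ)*I)) -
      (∫ y in (-R)..R, fn t α n ((σ₁:ℂ) + (y:ℂ)*I))) atTop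
      (nhds ((∫ y : ℝ, fn t α n ((σ₂:ℂ) + (y:ℂ)*I)) - ∫ y : ℝ, fn t α n ((σ₁:ℂ) + (y:ℂ)*I))) :=
    (htrunc σ₂ h2).sub (htrunc σ₁ h1)
  have := tendsto_nhds_unique hlim hzero
  exact (sub_eq_zero.1 this).symm
lemma moment_zero {α t : ℝ} (hα0 : 0 < α) (hα1 : α < 1) (ht : 0 < t) (n : ℕ) :
    ∫ y : ℝ, fn t α n ((1:ℂ) + (y:ℂ) * I) = 0 := by
  set c := t * Real.cos (α * Real.pi / 2) with hc
  have hcpos : 0 < c := mul_pos ht (cos_pos_aux hα0 hα1)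
  set K := ∫ y : ℝ, (1 + |y|)^n * Real.exp (-(c/2) * |y|^α) with hK
  -- the vertical integral tends to 0 as σ → ∞
  have hV : Tendsto (fun σ : ℝ => ∫ y : ℝ, fn t α n ((σ:ℂ) + (y:ℂ)*I)) atTop (nhds 0) := by
    have htd : Tendsto (fun σ : ℝ => ((1+σ)^n * Real.exp (-(c/2) * σ^α)) * K) atTop (nhds 0) := by
      have := (tendsto_shift_pow_mul_exp_neg_rpow 1 n
        (by linarith : (0:ℝ) < c/2) hα0).mul_const K
      rwa [zero_mul] at this
    apply squeeze_zero_norm' ?_ htd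
    · filter_upwards [eventually_ge_atTop (1:ℝ)] with σ hσ
      have hσ0 : 0 < σ := lt_of_lt_of_le one_pos hσ
      have hb : ∀ᵐ y : ℝ, ‖fn t α n ((σ:ℂ) + (y:ℂ)*I)‖ ≤
          ((1+σ)^n * Real.exp (-(c/2) * σ^α)) * ((1 + |y|)^n * Real.exp (-(c/2) * |y|^α)) := by
        apply ae_of_all
        intro y
        have h := norm_fn_le hα0 hα1 ht n (σ := σ) (y := y) hσ0
        rw [← hc] at h
        refine le_trans (by convert h using 4 <;> ring) ?_
        calc (σ + |y|)^n * (Real.exp (-(c/2) * σ^α) * Real.exp (-(c/2) * |y|^α))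
            ≤ ((1+σ) * (1+|y|))^n * (Real.exp (-(c/2) * σ^α) * Real.exp (-(c/2) * |y|^α)) := by
              apply mul_le_mul_of_nonneg_right _ (by positivity)
              apply pow_le_pow_left₀ (by positivity) _ n
              nlinarith [abs_nonneg y]
          _ = ((1+σ)^n * Real.exp (-(c/2) * σ^α)) * ((1 + |y|)^n * Real.exp (-(c/2) * |y|^α)) := by
              rw [mul_pow]; ring
      have := MeasureTheory.norm_integral_le_of_norm_le
        ((integrable_master n (by linarith : (0:ℝ) < c/2) hα0).const_mul
          ((1+σ)^n * Real.exp (-(c/2) * σ^α))) hb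
      rwa [MeasureTheory.integral_const_mul] at this
  -- the vertical integral is constant for σ ≥ 1
  have hconst : ∀ᶠ σ : ℝ in atTop, (∫ y : ℝ, fn t α n ((σ:ℂ) + (y:ℂ)*I)) =
      ∫ y : ℝ, fn t α n ((1:ℂ) + (y:ℂ)*I) := by
    filter_upwards [eventually_ge_atTop (1:ℝ)] with σ hσ
    have := vert_eq hα0 hα1 ht n one_pos hσ
    rw [← this]
    norm_num
  have h2 : Tendsto (fun _ : ℝ => ∫ y : ℝ, fn t α n ((1:ℂ) + (y:ℂ)*I)) atTop (nhds 0) :=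
    hV.congr' hconst
  exact tendsto_nhds_unique tendsto_const_nhds h2

-- Taylor remainder bound for exp
lemma exp_taylor_bound : ∀ (M : ℕ) (w : ℂ),
    ‖Complex.exp w - ∑ k ∈ Finset.range M, w^k / (Nat.factorial k)‖ ≤
    ‖w‖^M * Real.exp (max w.re 0) := by
  intro M
  induction M with
  | zero =>
    intro w
    simp only [Finset.range_zero, Finset.sum_empty, sub_zero, pow_zero, one_mul]
    rw [Complex.norm_exp]
    exact Real.exp_le_exp.2 (le_max_left _ _)
  | succ M ih =>
    intro w
    set F : ℝ → ℂ := fun u => Complex.exp ((u:ℂ)*w) -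
      ∑ k ∈ Finset.range (M+1), ((u:ℂ)*w)^k / (Nat.factorial k) with hF
    have hF0 : F 0 = 0 := by
      simp only [hF, Complex.ofReal_zero, zero_mul, Complex.exp_zero]
      rw [Finset.sum_range_succ']
      simp [zero_pow]
    have hderiv : ∀ u : ℝ, HasDerivAt F
        (w * (Complex.exp ((u:ℂ)*w) - ∑ k ∈ Finset.range M, ((u:ℂ)*w)^k / (Nat.factorial k))) u := by
      intro u
      have hbase : HasDerivAt (fun u : ℝ => (u:ℂ)*w) w u := by
        simpa using (Complex.ofRealCLM.hasDerivAt (x := u)).mul_const w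
      have h1 : HasDerivAt (fun u : ℝ => Complex.exp ((u:ℂ)*w)) (Complex.exp ((u:ℂ)*w) * w) u :=
        hbase.cexp
      have h2 : HasDerivAt (fun u : ℝ => ∑ k ∈ Finset.range (M+1), ((u:ℂ)*w)^k / (Nat.factorial k))
          (∑ k ∈ Finset.range (M+1), (k * ((u:ℂ)*w)^(k-1) * w) / (Nat.factorial k)) u := by
        apply HasDerivAt.fun_sum
        intro k _
        have hp := (hasDerivAt_pow k ((u:ℂ)*w)).comp u hbase
        simp only [Function.comp_def] at hp
        exact hp.div_const _
      have hsum : (∑ k ∈ Finset.range (M+1), ((k:ℂ) * ((u:ℂ)*w)^(k-1) * w) / (Nat.factorial k)) =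
          w * ∑ k ∈ Finset.range M, ((u:ℂ)*w)^k / (Nat.factorial k) := by
        rw [Finset.sum_range_succ']
        simp only [Nat.cast_zero, zero_mul, Nat.factorial_zero, Nat.cast_one, zero_div, add_zero]
        rw [Finset.mul_sum]
        apply Finset.sum_congr rfl
        intro k _
        have hfact : ((Nat.factorial (k+1) : ℂ)) = (k+1) * (Nat.factorial k) := by
          push_cast [Nat.factorial_succ]; ring
        have hk1 : ((k:ℂ)+1) ≠ 0 := Nat.cast_add_one_ne_zero k
        have hfk : ((Nat.factorial k : ℂ)) ≠ 0 := by
          exact_mod_cast Nat.cast_ne_zero.2 (Nat.factorial_ne_zero k)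
        push_cast
        rw [hfact]
        field_simp
      have := h1.fun_sub h2
      rw [hsum] at this
      refine this.congr_deriv ?_
      ring
    have hFTC : F 1 - F 0 = ∫ u in (0:ℝ)..1, w * (Complex.exp ((u:ℂ)*w) -
        ∑ k ∈ Finset.range M, ((u:ℂ)*w)^k / (Nat.factorial k)) := by
      rw [intervalIntegral.integral_eq_sub_of_hasDerivAt (fun u _ => hderiv u)]
      apply Continuous.intervalIntegrable
      apply continuous_const.mul
      apply Continuous.sub
      · exact Complex.continuous_exp.comp (Complex.continuous_ofReal.mul continuous_const)
      · apply continuous_finset_sum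
        intro k _
        exact ((Complex.continuous_ofReal.mul continuous_const).pow k).div_const _
    have hbnd : ‖F 1‖ ≤ (‖w‖ * (‖w‖^M * Real.exp (max w.re 0))) * |1 - 0| := by
      rw [hF0, sub_zero] at hFTC
      rw [hFTC]
      apply intervalIntegral.norm_integral_le_of_norm_le_const
      intro u hu
      rw [Set.uIoc_of_le one_pos.le] at hu
      rw [norm_mul]
      apply mul_le_mul_of_nonneg_left _ (norm_nonneg w)
      refine (ih ((u:ℂ)*w)).trans ?_
      have hu0 : 0 ≤ u := hu.1.le
      have hu1 : u ≤ 1 := hu.2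
      have h1 : ‖(u:ℂ)*w‖^M ≤ ‖w‖^M := by
        apply pow_le_pow_left₀ (norm_nonneg _) _ M
        rw [norm_mul, Complex.norm_real, Real.norm_eq_abs, _root_.abs_of_nonneg hu0]
        nlinarith [norm_nonneg w]
      have h2 : Real.exp (max ((u:ℂ)*w).re 0) ≤ Real.exp (max w.re 0) := by
        apply Real.exp_le_exp.2
        have : ((u:ℂ)*w).re = u * w.re := by simp [Complex.mul_re]
        rw [this]
        rcases le_or_gt 0 w.re with h | h
        · exact max_le (le_max_of_le_left (by nlinarith)) (le_max_right _ _)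
        · exact max_le (le_max_of_le_right (by nlinarith)) (le_max_right _ _)
      exact mul_le_mul h1 h2 (Real.exp_nonneg _) (by positivity)
    have hF1 : F 1 = Complex.exp w - ∑ k ∈ Finset.range (M+1), w^k / (Nat.factorial k) := by
      simp [hF]
    rw [hF1] at hbnd
    refine hbnd.trans ?_
    rw [show |(1:ℝ) - 0| = 1 by norm_num, mul_one]
    rw [pow_succ]
    ring_nf
    exact le_refl _
open Asymptotics in
theorem subordinator_littleO (α t : ℝ) (hα0 : 0 < α) (hα1 : α < 1) (ht : 0 < t) :
    ∀ N : ℕ, (fun s : ℝ => subordinator t α s) =o[nhdsWithin 0 (Set.Ioi 0)]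
      fun s : ℝ => s ^ N := by
  intro N
  set c := t * Real.cos (α * Real.pi / 2) with hc
  have hcpos : 0 < c := mul_pos ht (cos_pos_aux hα0 hα1)
  have hc2 : (0:ℝ) < c/2 := by linarith
  set M := N + 1 with hM
  set K := ∫ y : ℝ, (1 + |y|)^M * Real.exp (-(c/2) * |y|^α) with hK
  have hK0 : 0 ≤ K := integral_nonneg (fun y => by positivity)
  -- basic facts about the line z = 1 + iy
  have hfnint : ∀ k : ℕ, Integrable fun y : ℝ => fn t α k ((1:ℂ) + (y:ℂ)*I) := fun k => by
    have := integrable_fn hα0 hα1 ht k (σ := 1) one_pos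
    simpa using this
  have hfnle : ∀ (k:ℕ) (y:ℝ), ‖fn t α k ((1:ℂ) + (y:ℂ)*I)‖ ≤
      (1+|y|)^k * Real.exp (-(c/2) * |y|^α) := by
    intro k y
    have h := norm_fn_le hα0 hα1 ht k (σ := 1) (y := y) one_pos
    rw [← hc] at h
    simp only [Complex.ofReal_one] at h
    refine h.trans ?_
    have h1 : Real.exp (-(c/2) * (1:ℝ)^α) ≤ 1 := by
      rw [Real.one_rpow]
      apply Real.exp_le_one_iff.2
      linarith
    calc (1+|y|)^k * (Real.exp (-(c/2)*(1:ℝ)^α) * Real.exp (-(c/2)*|y|^α))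
        ≤ (1+|y|)^k * (1 * Real.exp (-(c/2)*|y|^α)) := by
          apply mul_le_mul_of_nonneg_left _ (by positivity)
          exact mul_le_mul_of_nonneg_right h1 (Real.exp_nonneg _)
      _ = (1+|y|)^k * Real.exp (-(c/2)*|y|^α) := by ring
  have hEcont : Continuous fun y : ℝ => Complex.exp (-(t:ℂ) * (((1:ℂ) + (y:ℂ)*I) ^ (α:ℂ))) := by
    have := continuous_fn t α 0 (σ := 1) one_pos
    simpa [fn] using this
  -- the global bound
  have hmain : ∀ s : ℝ, 0 < s →
      ‖subordinator t α s‖ ≤ (2*Real.pi)⁻¹ * (s^M * Real.exp s * K) := by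
    intro s hs
    have key : ‖∫ y : ℝ, Complex.exp (((1:ℂ) + (y:ℂ) * I) * (s:ℂ)
        - (t:ℂ) * (((1:ℂ) + (y:ℂ) * I) ^ (α:ℂ)))‖ ≤ s^M * Real.exp s * K := by
      -- rewrite the integrand as sum-part plus remainder-part
      have hGeq : (fun y : ℝ => Complex.exp (((1:ℂ) + (y:ℂ) * I) * (s:ℂ)
          - (t:ℂ) * (((1:ℂ) + (y:ℂ) * I) ^ (α:ℂ)))) = fun y : ℝ =>
          (∑ k ∈ Finset.range M, (((1:ℂ) + (y:ℂ)*I) * (s:ℂ))^k / (Nat.factorial k)) *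
            Complex.exp (-(t:ℂ) * (((1:ℂ) + (y:ℂ)*I) ^ (α:ℂ))) +
          (Complex.exp (((1:ℂ) + (y:ℂ)*I) * (s:ℂ)) -
            ∑ k ∈ Finset.range M, (((1:ℂ) + (y:ℂ)*I) * (s:ℂ))^k / (Nat.factorial k)) *
            Complex.exp (-(t:ℂ) * (((1:ℂ) + (y:ℂ)*I) ^ (α:ℂ))) := by
        funext y
        have hx : Complex.exp (((1:ℂ) + (y:ℂ)*I) * (s:ℂ)
            - (t:ℂ) * (((1:ℂ) + (y:ℂ)*I) ^ (α:ℂ))) =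
            Complex.exp (((1:ℂ) + (y:ℂ)*I) * (s:ℂ)) *
            Complex.exp (-(t:ℂ) * (((1:ℂ) + (y:ℂ)*I) ^ (α:ℂ))) := by
          rw [← Complex.exp_add]
          congr 1
          ring
        rw [hx]
        ring
      -- integrability of the pieces
      have htermeq : ∀ k : ℕ, (fun y : ℝ => (((1:ℂ) + (y:ℂ)*I) * (s:ℂ))^k / (Nat.factorial k) *
          Complex.exp (-(t:ℂ) * (((1:ℂ) + (y:ℂ)*I) ^ (α:ℂ)))) =
          fun y : ℝ => ((s:ℂ)^k / (Nat.factorial k)) * fn t α k ((1:ℂ) + (y:ℂ)*I) := by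
        intro k
        funext y
        simp only [fn]
        rw [mul_pow]
        ring
      have hterm_int : ∀ k : ℕ, Integrable fun y : ℝ =>
          (((1:ℂ) + (y:ℂ)*I) * (s:ℂ))^k / (Nat.factorial k) *
          Complex.exp (-(t:ℂ) * (((1:ℂ) + (y:ℂ)*I) ^ (α:ℂ))) := by
        intro k
        rw [htermeq k]
        exact (hfnint k).const_mul _
      have hsumeq : (fun y : ℝ => (∑ k ∈ Finset.range M,
          (((1:ℂ) + (y:ℂ)*I) * (s:ℂ))^k / (Nat.factorial k)) *
          Complex.exp (-(t:ℂ) * (((1:ℂ) + (y:ℂ)*I) ^ (α:ℂ)))) =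
          fun y : ℝ => ∑ k ∈ Finset.range M,
          (((1:ℂ) + (y:ℂ)*I) * (s:ℂ))^k / (Nat.factorial k) *
          Complex.exp (-(t:ℂ) * (((1:ℂ) + (y:ℂ)*I) ^ (α:ℂ))) := by
        funext y
        rw [Finset.sum_mul]
      have hsum_int : Integrable fun y : ℝ => (∑ k ∈ Finset.range M,
          (((1:ℂ) + (y:ℂ)*I) * (s:ℂ))^k / (Nat.factorial k)) *
          Complex.exp (-(t:ℂ) * (((1:ℂ) + (y:ℂ)*I) ^ (α:ℂ))) := by
        rw [hsumeq]
        exact integrable_finset_sum _ (fun k _ => hterm_int k)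
      have hnormexp : ∀ y : ℝ, ‖Complex.exp (((1:ℂ) + (y:ℂ)*I) * (s:ℂ))‖ = Real.exp s := by
        intro y
        rw [Complex.norm_exp]
        congr 1
        simp [Complex.mul_re]
      have hG_int : Integrable fun y : ℝ => Complex.exp (((1:ℂ) + (y:ℂ)*I) * (s:ℂ)) *
          Complex.exp (-(t:ℂ) * (((1:ℂ) + (y:ℂ)*I) ^ (α:ℂ))) := by
        apply Integrable.mono'
          ((integrable_master 0 hc2 hα0).const_mul (Real.exp s))
        · apply Continuous.aestronglyMeasurable
          apply Continuous.mul _ hEcont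
          exact Complex.continuous_exp.comp
            ((continuous_const.add (Complex.continuous_ofReal.mul continuous_const)).mul
              continuous_const)
        · apply ae_of_all
          intro y
          rw [norm_mul, hnormexp y]
          have h0 := hfnle 0 y
          simp only [fn, pow_zero, one_mul] at h0
          calc Real.exp s * ‖Complex.exp (-(t:ℂ) * (((1:ℂ) + (y:ℂ)*I) ^ (α:ℂ)))‖
              ≤ Real.exp s * ((1+|y|)^0 * Real.exp (-(c/2) * |y|^α)) := by
                apply mul_le_mul_of_nonneg_left _ (Real.exp_nonneg s)
                simpa using h0
            _ = Real.exp s * ((1+|y|)^0 * Real.exp (-(c/2) * |y|^α)) := rfl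
      have hrem_int : Integrable fun y : ℝ =>
          (Complex.exp (((1:ℂ) + (y:ℂ)*I) * (s:ℂ)) -
            ∑ k ∈ Finset.range M, (((1:ℂ) + (y:ℂ)*I) * (s:ℂ))^k / (Nat.factorial k)) *
          Complex.exp (-(t:ℂ) * (((1:ℂ) + (y:ℂ)*I) ^ (α:ℂ))) := by
        have heq2 : (fun y : ℝ =>
            (Complex.exp (((1:ℂ) + (y:ℂ)*I) * (s:ℂ)) -
              ∑ k ∈ Finset.range M, (((1:ℂ) + (y:ℂ)*I) * (s:ℂ))^k / (Nat.factorial k)) *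
            Complex.exp (-(t:ℂ) * (((1:ℂ) + (y:ℂ)*I) ^ (α:ℂ)))) = fun y : ℝ =>
            Complex.exp (((1:ℂ) + (y:ℂ)*I) * (s:ℂ)) *
              Complex.exp (-(t:ℂ) * (((1:ℂ) + (y:ℂ)*I) ^ (α:ℂ))) -
            (∑ k ∈ Finset.range M, (((1:ℂ) + (y:ℂ)*I) * (s:ℂ))^k / (Nat.factorial k)) *
              Complex.exp (-(t:ℂ) * (((1:ℂ) + (y:ℂ)*I) ^ (α:ℂ))) := by
          funext y; ring
        rw [heq2]
        exact hG_int.sub hsum_int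
      -- the sum part integrates to zero
      have hsum_zero : (∫ y : ℝ, (∑ k ∈ Finset.range M,
          (((1:ℂ) + (y:ℂ)*I) * (s:ℂ))^k / (Nat.factorial k)) *
          Complex.exp (-(t:ℂ) * (((1:ℂ) + (y:ℂ)*I) ^ (α:ℂ)))) = 0 := by
        rw [hsumeq, MeasureTheory.integral_finset_sum _ (fun k _ => hterm_int k)]
        apply Finset.sum_eq_zero
        intro k _
        rw [htermeq k, MeasureTheory.integral_const_mul, moment_zero hα0 hα1 ht k, mul_zero]
      -- put together
      have hsplit : (∫ y : ℝ, Complex.exp (((1:ℂ) + (y:ℂ) * I) * (s:ℂ)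
          - (t:ℂ) * (((1:ℂ) + (y:ℂ) * I) ^ (α:ℂ)))) =
          ∫ y : ℝ, (Complex.exp (((1:ℂ) + (y:ℂ)*I) * (s:ℂ)) -
            ∑ k ∈ Finset.range M, (((1:ℂ) + (y:ℂ)*I) * (s:ℂ))^k / (Nat.factorial k)) *
          Complex.exp (-(t:ℂ) * (((1:ℂ) + (y:ℂ)*I) ^ (α:ℂ))) := by
        rw [hGeq, MeasureTheory.integral_add hsum_int hrem_int, hsum_zero, zero_add]
      rw [hsplit]
      -- bound the remainder integral
      have hptwise : ∀ y : ℝ, ‖(Complex.exp (((1:ℂ) + (y:ℂ)*I) * (s:ℂ)) -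
          ∑ k ∈ Finset.range M, (((1:ℂ) + (y:ℂ)*I) * (s:ℂ))^k / (Nat.factorial k)) *
          Complex.exp (-(t:ℂ) * (((1:ℂ) + (y:ℂ)*I) ^ (α:ℂ)))‖ ≤
          (s^M * Real.exp s) * ((1 + |y|)^M * Real.exp (-(c/2) * |y|^α)) := by
        intro y
        rw [norm_mul]
        have htay := exp_taylor_bound M (((1:ℂ) + (y:ℂ)*I) * (s:ℂ))
        have hre : ((((1:ℂ) + (y:ℂ)*I)) * (s:ℂ)).re = s := by
          simp [Complex.mul_re]
        have hmax : max ((((1:ℂ) + (y:ℂ)*I)) * (s:ℂ)).re 0 = s := by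
          rw [hre]; exact max_eq_left hs.le
        have hnw : ‖(((1:ℂ) + (y:ℂ)*I)) * (s:ℂ)‖^M = ‖((1:ℂ) + (y:ℂ)*I)‖^M * s^M := by
          rw [norm_mul, Complex.norm_real, Real.norm_eq_abs, _root_.abs_of_pos hs, mul_pow]
        rw [hmax, hnw] at htay
        calc ‖Complex.exp (((1:ℂ) + (y:ℂ)*I) * (s:ℂ)) -
            ∑ k ∈ Finset.range M, (((1:ℂ) + (y:ℂ)*I) * (s:ℂ))^k / (Nat.factorial k)‖ *
            ‖Complex.exp (-(t:ℂ) * (((1:ℂ) + (y:ℂ)*I) ^ (α:ℂ)))‖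
            ≤ (‖((1:ℂ) + (y:ℂ)*I)‖^M * s^M * Real.exp s) *
              ‖Complex.exp (-(t:ℂ) * (((1:ℂ) + (y:ℂ)*I) ^ (α:ℂ)))‖ := by
              exact mul_le_mul_of_nonneg_right htay (norm_nonneg _)
          _ = (s^M * Real.exp s) * (‖((1:ℂ) + (y:ℂ)*I)‖^M *
              ‖Complex.exp (-(t:ℂ) * (((1:ℂ) + (y:ℂ)*I) ^ (α:ℂ)))‖) := by ring
          _ = (s^M * Real.exp s) * ‖fn t α M ((1:ℂ) + (y:ℂ)*I)‖ := by
              rw [fn, norm_mul, norm_pow]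
          _ ≤ (s^M * Real.exp s) * ((1 + |y|)^M * Real.exp (-(c/2) * |y|^α)) := by
              apply mul_le_mul_of_nonneg_left (hfnle M y) (by positivity)
      have := MeasureTheory.norm_integral_le_of_norm_le
        ((integrable_master M hc2 hα0).const_mul (s^M * Real.exp s)) (ae_of_all _ hptwise)
      rwa [MeasureTheory.integral_const_mul] at this
    -- from key to the subordinator bound
    rw [subordinator, if_neg (not_lt.2 hs.le)]
    rw [norm_mul, Real.norm_eq_abs, Real.norm_eq_abs]
    have h2pi : |(2*Real.pi)⁻¹| = (2*Real.pi)⁻¹ := by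
      rw [_root_.abs_of_pos]; positivity
    rw [h2pi]
    apply mul_le_mul_of_nonneg_left _ (by positivity)
    refine le_trans ?_ key
    exact (Complex.abs_re_le_norm _)
  -- conclude littleO
  rw [Asymptotics.isLittleO_iff]
  intro ε hε
  set C0 := (2*Real.pi)⁻¹ * (Real.exp 1 * K) with hC0
  have hC00 : 0 ≤ C0 := by positivity
  have hδ : 0 < min 1 (ε / (C0+1)) := by
    apply lt_min one_pos
    positivity
  filter_upwards [Ioo_mem_nhdsGT_of_mem (Set.mem_Ico.2 ⟨le_refl (0:ℝ), hδ⟩)] with s hs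
  have hs0 : 0 < s := hs.1
  have hs1 : s ≤ 1 := le_of_lt (lt_of_lt_of_le hs.2 (min_le_left _ _))
  have hsε : s ≤ ε / (C0+1) := le_of_lt (lt_of_lt_of_le hs.2 (min_le_right _ _))
  have hb := hmain s hs0
  have hexp : Real.exp s ≤ Real.exp 1 := Real.exp_le_exp.2 hs1
  calc ‖subordinator t α s‖ ≤ (2*Real.pi)⁻¹ * (s^M * Real.exp s * K) := hb
    _ = ((2*Real.pi)⁻¹ * (Real.exp s * K) * s) * s^N := by rw [hM]; ring
    _ ≤ (ε) * s^N := by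
        apply mul_le_mul_of_nonneg_right _ (by positivity)
        have h1 : (2*Real.pi)⁻¹ * (Real.exp s * K) ≤ C0 := by
          rw [hC0]
          apply mul_le_mul_of_nonneg_left _ (by positivity)
          exact mul_le_mul_of_nonneg_right hexp hK0
        have h2 : (2*Real.pi)⁻¹ * (Real.exp s * K) * s ≤ C0 * s :=
          mul_le_mul_of_nonneg_right h1 hs0.le
        refine h2.trans ?_
        have h3 : (C0+1) * s ≤ ε := by
          calc (C0+1)*s ≤ (C0+1) * (ε/(C0+1)) := by
                apply mul_le_mul_of_nonneg_left hsε (by positivity)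
            _ = ε := by field_simp
        nlinarith
    _ ≤ ε * ‖s^N‖ := by
        apply mul_le_mul_of_nonneg_left _ hε.le
        rw [Real.norm_eq_abs]
        exact le_abs_self _
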